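/- Let K ≥ 3, 0 ≤ k ≤ K−2, and P_X a distribution on a finite set X. For each x let j(x) ∈ {0,…,K−2} and define l_k(x) = ⌈−log_K P_X(x) + log_K((K−j(x))/(K−k))⌉. Then ∑_x (K−j(x))·(K−k)^{-1}·K^{-l_k(x)} ≤ 1, and ∑_x P_X(x)·l_k(x) < H_K(X) + ∑_{j} P(N_j^{(k)})·log_K((K−j)/(K−k)) + 1. -/

import Mathlib

open Finset in
/-- Ceiling lengths satisfy the relaxed Kraft-like inequality and yield the
upper bound on average code length for K-ary AIFV code trees. -/
theorem stmt_4 {X : Type*} [Fintype X] (K k : ℕ) (hK : 3 ≤ K) (hk : k ≤ K - 2)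
    (P : X → ℝ) (hP : ∀ x, 0 < P x) (hPsum : ∑ x, P x = 1)
    (j : X → ℕ) (hj : ∀ x, j x ≤ K - 2) (l : X → ℤ)
    (hl : ∀ x, l x =
      ⌈-Real.logb K (P x) + Real.logb K (((K : ℝ) - j x) / ((K : ℝ) - k))⌉) :
    (∑ x, ((K : ℝ) - j x) * ((K : ℝ) - k)⁻¹ * (K : ℝ) ^ (-(l x)) ≤ 1) ∧
    ∑ x, P x * (l x : ℝ) <
      (-∑ x, P x * Real.logb K (P x)) +
        (∑ j' ∈ Finset.range (K - 1),
          (∑ x ∈ Finset.univ.filter (fun x => j x = j'), P x) *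
            Real.logb K (((K : ℝ) - j') / ((K : ℝ) - k))) + 1 := by
  have hK1 : (1:ℝ) < K := by
    have : (3:ℝ) ≤ K := by exact_mod_cast hK
    linarith
  have hK0 : (0:ℝ) < K := by linarith
  have hkK : (k:ℝ) < K := by
    have : k < K := by omega
    exact_mod_cast this
  have hjK : ∀ x, (j x : ℝ) < K := fun x => by
    have : j x < K := by have := hj x; omega
    exact_mod_cast this
  set a : X → ℝ := fun x =>
    -Real.logb K (P x) + Real.logb K (((K:ℝ) - j x)/((K:ℝ)-k)) with ha
  have hq : ∀ x, (0:ℝ) < ((K:ℝ) - j x)/((K:ℝ)-k) := fun x =>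
    div_pos (by linarith [hjK x]) (by linarith)
  have hKa : ∀ x, (K:ℝ) ^ (a x) = ((K:ℝ) - j x)/((K:ℝ)-k) / P x := by
    intro x
    rw [ha]
    rw [Real.rpow_add hK0, Real.rpow_neg hK0.le,
      Real.rpow_logb hK0 (by linarith) (hP x),
      Real.rpow_logb hK0 (by linarith) (hq x)]
    field_simp
  have hle : ∀ x, (K:ℝ) ^ (-(l x)) ≤ P x * ((K:ℝ)-k) / ((K:ℝ) - j x) := by
    intro x
    have h1 : a x ≤ (l x : ℝ) := by rw [hl x]; exact Int.le_ceil _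
    have h2 : (K:ℝ) ^ (-(l x)) = (K:ℝ) ^ ((-(l x) : ℤ) : ℝ) :=
      (Real.rpow_intCast _ _).symm
    rw [h2]
    have h3 : (K:ℝ) ^ (((-(l x) : ℤ)) : ℝ) ≤ (K:ℝ) ^ (-(a x)) := by
      apply Real.rpow_le_rpow_of_exponent_le hK1.le
      push_cast
      linarith
    refine h3.trans_eq ?_
    have hj0 : ((K:ℝ) - j x) ≠ 0 := by have := hjK x; intro h; linarith
    have hk0 : ((K:ℝ) - k) ≠ 0 := by intro h; linarith
    have hP0 : P x ≠ 0 := (hP x).ne'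
    rw [Real.rpow_neg hK0.le, hKa x]
    field_simp
  have hterm : ∀ x, ((K : ℝ) - j x) * ((K : ℝ) - k)⁻¹ * (K : ℝ) ^ (-(l x)) ≤ P x := by
    intro x
    have hj0 : (0:ℝ) < (K:ℝ) - j x := by linarith [hjK x]
    have hk0 : (0:ℝ) < (K:ℝ) - k := by linarith
    have := mul_le_mul_of_nonneg_left (hle x)
      (le_of_lt (mul_pos hj0 (inv_pos.mpr hk0)))
    calc ((K : ℝ) - j x) * ((K : ℝ) - k)⁻¹ * (K : ℝ) ^ (-(l x))
        ≤ ((K : ℝ) - j x) * ((K : ℝ) - k)⁻¹ * (P x * ((K:ℝ)-k) / ((K:ℝ) - j x)) := this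
      _ = P x := by field_simp
  have hne : (Finset.univ : Finset X).Nonempty := by
    rcases (Finset.univ : Finset X).eq_empty_or_nonempty with h | h
    · rw [h] at hPsum; simp at hPsum
    · exact h
  constructor
  · calc ∑ x, ((K : ℝ) - j x) * ((K : ℝ) - k)⁻¹ * (K : ℝ) ^ (-(l x))
        ≤ ∑ x, P x := Finset.sum_le_sum fun x _ => hterm x
      _ = 1 := hPsum
  · have hstrict : ∑ x, P x * (l x : ℝ) < ∑ x, P x * (a x + 1) := by
      apply Finset.sum_lt_sum_of_nonempty hne
      intro x _
      have : (l x : ℝ) < a x + 1 := by rw [hl x]; exact Int.ceil_lt_add_one _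
      exact mul_lt_mul_of_pos_left this (hP x)
    have hfib : ∑ j' ∈ Finset.range (K - 1),
        (∑ x ∈ Finset.univ.filter (fun x => j x = j'), P x) *
          Real.logb K (((K : ℝ) - j') / ((K : ℝ) - k))
        = ∑ x, P x * Real.logb K (((K:ℝ) - j x)/((K:ℝ)-k)) := by
      rw [← Finset.sum_fiberwise_of_maps_to (g := j)
        (fun x _ => Finset.mem_range.mpr (show j x < K - 1 by have := hj x; omega))
        (fun x => P x * Real.logb K (((K:ℝ) - j x)/((K:ℝ)-k)))]
      apply Finset.sum_congr rfl
      intro j' _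
      rw [Finset.sum_mul]
      apply Finset.sum_congr rfl
      intro x hx
      have : j x = j' := (Finset.mem_filter.mp hx).2
      rw [this]
    have hsum : ∑ x, P x * (a x + 1)
        = (-∑ x, P x * Real.logb K (P x)) +
          (∑ x, P x * Real.logb K (((K:ℝ) - j x)/((K:ℝ)-k))) + 1 := by
      have hx : ∀ x, P x * (a x + 1) =
          -(P x * Real.logb K (P x)) +
            P x * Real.logb K (((K:ℝ) - j x)/((K:ℝ)-k)) + P x := by
        intro x; rw [ha]; ring
      rw [Finset.sum_congr rfl (fun x _ => hx x), Finset.sum_add_distrib,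
        Finset.sum_add_distrib, Finset.sum_neg_distrib, hPsum]
    rw [hfib]
    linarith [hstrict, hsum.le, hsum.ge]
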